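/- Let R be a ring and (𝒯, ℱ) a torsion pair in R-Mod. If B is torsionfree, almost torsion for (𝒯, ℱ), then B is a brick, i.e., End_R(B) is a division ring. -/

import Mathlib

universe u v
variable {R : Type u} [Ring R]

/-- A torsion pair in `R`-Mod: `Hom(𝒯, ℱ) = 0` and both classes are maximal with
this property. -/
def IsTorsionPair (R : Type u) [Ring R] (𝒯 ℱ : Set (ModuleCat.{v} R)) : Prop :=
  (∀ T ∈ 𝒯, ∀ F ∈ ℱ, ∀ f : ↑T →ₗ[R] ↑F, f = 0) ∧
  (∀ M : ModuleCat.{v} R, (∀ F ∈ ℱ, ∀ f : ↑M →ₗ[R] ↑F, f = 0) → M ∈ 𝒯) ∧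
  (∀ M : ModuleCat.{v} R, (∀ T ∈ 𝒯, ∀ f : ↑T →ₗ[R] ↑M, f = 0) → M ∈ ℱ)

/-- Every module has a torsion submodule, lying in `𝒯`, with quotient in `ℱ`. -/
def HasTorsionRadical (R : Type u) [Ring R] (𝒯 ℱ : Set (ModuleCat.{v} R)) : Prop :=
  ∀ M : ModuleCat.{v} R, ∃ tM : Submodule R ↑M,
    ModuleCat.of R tM ∈ 𝒯 ∧ ModuleCat.of R (↑M ⧸ tM) ∈ ℱ


/-- `B` is torsionfree, almost torsion for `(𝒯, ℱ)`: it is a nonzero torsionfree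
module, every proper quotient is torsion, and for every short exact sequence
`0 → B → F → M → 0` with `F ∈ ℱ` also `M ∈ ℱ`. -/
def IsTFAlmostTorsion (𝒯 ℱ : Set (ModuleCat.{v} R)) (B : ModuleCat.{v} R) : Prop :=
  Nontrivial ↑B ∧ B ∈ ℱ ∧
  (∀ N : Submodule R ↑B, N ≠ ⊥ → ModuleCat.of R (↑B ⧸ N) ∈ 𝒯) ∧
  (∀ F ∈ ℱ, ∀ i : ↑B →ₗ[R] ↑F, Function.Injective i →
    ModuleCat.of R (↑F ⧸ LinearMap.range i) ∈ ℱ)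

/-- A torsionfree, almost torsion module is a brick: its endomorphism ring is a
division ring, i.e. every nonzero endomorphism is invertible. -/
theorem stmt_5 (𝒯 ℱ : Set (ModuleCat.{v} R)) (htp : IsTorsionPair R 𝒯 ℱ)
    (B : ModuleCat.{v} R) (hB : IsTFAlmostTorsion 𝒯 ℱ B) :
    ∀ f : ↑B →ₗ[R] ↑B, f ≠ 0 → Function.Bijective f := by
  obtain ⟨hnt, hBF, hquot, hses⟩ := hB
  intro f hf
  -- injectivity
  have hinj : Function.Injective f := by
    by_contra h
    have hker : LinearMap.ker f ≠ ⊥ := by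
      intro h0
      exact h (LinearMap.ker_eq_bot.mp h0)
    have hT : ModuleCat.of R (↑B ⧸ LinearMap.ker f) ∈ 𝒯 := hquot _ hker
    have hzero := htp.1 _ hT B hBF ((LinearMap.ker f).liftQ f le_rfl)
    apply hf
    ext x
    have : (LinearMap.ker f).liftQ f le_rfl ((LinearMap.ker f).mkQ x) = f x := rfl
    rw [hzero] at this
    simpa using this.symm
  refine ⟨hinj, ?_⟩
  -- surjectivity
  have hFq : ModuleCat.of R (↑B ⧸ LinearMap.range f) ∈ ℱ := hses B hBF f hinj
  by_cases hr : LinearMap.range f = ⊤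
  · intro y
    have : y ∈ LinearMap.range f := hr ▸ Submodule.mem_top
    exact this
  · have hrb : LinearMap.range f ≠ ⊥ := by
      intro h0
      exact hf (LinearMap.range_eq_bot.mp h0)
    have hT : ModuleCat.of R (↑B ⧸ LinearMap.range f) ∈ 𝒯 := hquot _ hrb
    have hzero := htp.1 _ hT _ hFq (LinearMap.id)
    have hsub : Subsingleton (↑B ⧸ LinearMap.range f) := by
      constructor
      intro a b
      have ha : (LinearMap.id : (↑B ⧸ LinearMap.range f) →ₗ[R] _) a = a := rfl
      have hb : (LinearMap.id : (↑B ⧸ LinearMap.range f) →ₗ[R] _) b = b := rfl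
      rw [hzero] at ha hb
      rw [← ha, ← hb]
      rfl
    exact absurd (Submodule.Quotient.subsingleton_iff.mp hsub) hr
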